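/- For any n×n Hermitian matrix A and any partition P of [n] into k nonempty parts, the eigenvalues of the quotient matrix B = A|P×P interlace those of A: μᵢ(A) ≥ μᵢ(B) ≥ μ_{n-k+i}(A) for all i ∈ [k]. -/

import Mathlib

def partSet {n k : ℕ} (P : Fin n → Fin k) (i : Fin k) : Finset (Fin n) :=
  Finset.univ.filter (fun v => P v = i)

/-- Complex quotient matrix `A|P×Q`. -/
noncomputable def quotMatC {m n k l : ℕ} (A : Matrix (Fin m) (Fin n) ℂ)
    (P : Fin m → Fin k) (Q : Fin n → Fin l) : Matrix (Fin k) (Fin l) ℂ :=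
  fun p q => ((1 / Real.sqrt (((partSet P p).card : ℝ) * ((partSet Q q).card : ℝ)) : ℝ) : ℂ) *
    ∑ i ∈ partSet P p, ∑ j ∈ partSet Q q, A i j



open scoped InnerProductSpace

variable {E : Type*} [NormedAddCommGroup E] [InnerProductSpace ℂ E]

lemma coords_zero {n : ℕ}
    (f : OrthonormalBasis (Fin n) ℂ E) (s : Finset (Fin n)) {x : E}
    (hx : x ∈ Submodule.span ℂ (f '' ↑s)) {j : Fin n} (hj : j ∉ s) :
    f.repr x j = 0 := by
  rw [f.repr_apply_apply]
  induction hx using Submodule.span_induction with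
  | mem y hy =>
    obtain ⟨i, hi, rfl⟩ := hy
    exact f.orthonormal.2 (fun h => hj (h ▸ hi))
  | zero => simp
  | add y z _ _ hy hz => rw [inner_add_right, hy, hz, add_zero]
  | smul c y _ hy => rw [inner_smul_right, hy, mul_zero]

lemma rayleigh_expand {n : ℕ}
    (f : OrthonormalBasis (Fin n) ℂ E) (μ : Fin n → ℝ)
    (T : E →ₗ[ℂ] E) (hT : ∀ j, T (f j) = (μ j : ℂ) • f j) (x : E) :
    (⟪x, T x⟫_ℂ).re = ∑ j, μ j * ‖f.repr x j‖ ^ 2 := by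
  have hx : x = ∑ j, f.repr x j • f j := (f.sum_repr x).symm
  have hTx : T x = ∑ j, (f.repr x j * (μ j : ℂ)) • f j := by
    conv_lhs => rw [hx]
    rw [map_sum]
    refine Finset.sum_congr rfl fun j _ => ?_
    rw [map_smul, hT, smul_smul]
  have key : ⟪x, T x⟫_ℂ = ∑ j, (starRingEnd ℂ) (f.repr x j) * (f.repr x j * (μ j : ℂ)) := by
    rw [hTx]
    nth_rewrite 1 [hx]
    rw [sum_inner]
    simp [inner_sum, inner_smul_left, inner_smul_right,
      orthonormal_iff_ite.mp f.orthonormal, mul_ite, mul_one, mul_zero, mul_comm]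
  rw [key]
  rw [Complex.re_sum]
  refine Finset.sum_congr rfl fun j _ => ?_
  have : (starRingEnd ℂ) (f.repr x j) * (f.repr x j * (μ j : ℂ))
      = ((‖f.repr x j‖ ^ 2 : ℝ) : ℂ) * (μ j : ℂ) := by
    rw [← mul_assoc, Complex.conj_mul']
    norm_cast
  rw [this, ← Complex.ofReal_mul, Complex.ofReal_re, mul_comm]

lemma norm_sq_expand {n : ℕ} (f : OrthonormalBasis (Fin n) ℂ E) (x : E) :
    ‖x‖ ^ 2 = ∑ j, ‖f.repr x j‖ ^ 2 := by
  rw [← f.repr.norm_map x, EuclideanSpace.norm_eq, Real.sq_sqrt]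
  exact Finset.sum_nonneg fun j _ => sq_nonneg _

lemma rayleigh_le {n : ℕ}
    (f : OrthonormalBasis (Fin n) ℂ E) (μ : Fin n → ℝ)
    (T : E →ₗ[ℂ] E) (hT : ∀ j, T (f j) = (μ j : ℂ) • f j)
    (s : Finset (Fin n)) (c : ℝ) (hc : ∀ j ∈ s, μ j ≤ c)
    {x : E} (hx : x ∈ Submodule.span ℂ (f '' ↑s)) :
    (⟪x, T x⟫_ℂ).re ≤ c * ‖x‖ ^ 2 := by
  rw [rayleigh_expand f μ T hT x, norm_sq_expand f x, Finset.mul_sum]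
  rw [← Finset.sum_subset (Finset.subset_univ s)
    (fun j _ hj => by rw [coords_zero f s hx hj]; simp),
    ← Finset.sum_subset (Finset.subset_univ s)
    (fun j _ hj => by rw [coords_zero f s hx hj]; simp)]
  exact Finset.sum_le_sum fun j hj =>
    mul_le_mul_of_nonneg_right (hc j hj) (sq_nonneg _)

lemma rayleigh_ge {n : ℕ}
    (f : OrthonormalBasis (Fin n) ℂ E) (μ : Fin n → ℝ)
    (T : E →ₗ[ℂ] E) (hT : ∀ j, T (f j) = (μ j : ℂ) • f j)
    (s : Finset (Fin n)) (c : ℝ) (hc : ∀ j ∈ s, c ≤ μ j)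
    {x : E} (hx : x ∈ Submodule.span ℂ (f '' ↑s)) :
    c * ‖x‖ ^ 2 ≤ (⟪x, T x⟫_ℂ).re := by
  rw [rayleigh_expand f μ T hT x, norm_sq_expand f x, Finset.mul_sum]
  rw [← Finset.sum_subset (Finset.subset_univ s)
    (fun j _ hj => by rw [coords_zero f s hx hj]; simp),
    ← Finset.sum_subset (Finset.subset_univ s)
    (fun j _ hj => by rw [coords_zero f s hx hj]; simp)]
  exact Finset.sum_le_sum fun j hj =>
    mul_le_mul_of_nonneg_right (hc j hj) (sq_nonneg _)

lemma finrank_span_orthonormal {ι : Type*} [Fintype ι] {f : ι → E}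
    (hf : Orthonormal ℂ f) (s : Finset ι) :
    Module.finrank ℂ (Submodule.span ℂ (f '' ↑s)) = s.card := by
  have h : f '' ↑s = Set.range (fun j : ↥s => f j) := by
    ext y; simp [Set.mem_image]
  rw [h]
  exact (finrank_span_eq_card (hf.linearIndependent.comp _ Subtype.val_injective)).trans
    (Fintype.card_coe s)

lemma exists_ne_zero_mem_inf [FiniteDimensional ℂ E]
    (W1 W2 : Submodule ℂ E)
    (h : Module.finrank ℂ E < Module.finrank ℂ W1 + Module.finrank ℂ W2) :
    ∃ x : E, x ≠ 0 ∧ x ∈ W1 ∧ x ∈ W2 := by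
  have h1 := Submodule.finrank_sup_add_finrank_inf_eq W1 W2
  have h2 : Module.finrank ℂ ↥(W1 ⊔ W2) ≤ Module.finrank ℂ E := Submodule.finrank_le _
  have h3 : 0 < Module.finrank ℂ ↥(W1 ⊓ W2) := by omega
  rw [Module.finrank_pos_iff] at h3
  obtain ⟨⟨y, hy⟩, hy0⟩ := exists_ne (0 : ↥(W1 ⊓ W2))
  refine ⟨y, fun h0 => hy0 (by simpa [Submodule.mk_eq_zero] using h0), (hy.1 : y ∈ W1), hy.2⟩

lemma interlace_abstract {n k : ℕ} (hkn : k ≤ n)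
    {F : Type*} [NormedAddCommGroup F] [InnerProductSpace ℂ F]
    [FiniteDimensional ℂ E]
    (hE : Module.finrank ℂ E = n)
    (f : OrthonormalBasis (Fin n) ℂ E) (μ : Fin n → ℝ) (hμ : Antitone μ)
    (T : E →ₗ[ℂ] E) (hT : ∀ j, T (f j) = (μ j : ℂ) • f j)
    (g : OrthonormalBasis (Fin k) ℂ F) (ν : Fin k → ℝ) (hν : Antitone ν)
    (U : F →ₗ[ℂ] F) (hU : ∀ j, U (g j) = (ν j : ℂ) • g j)
    (S : F →ₗᵢ[ℂ] E)
    (hSU : ∀ y : F, ⟪(S y : E), T (S y)⟫_ℂ = ⟪y, U y⟫_ℂ)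
    (i : Fin k) (hik : (n - k + (i : ℕ)) < n) :
    ν i ≤ μ (Fin.castLE hkn i) ∧ μ ⟨n - k + (i : ℕ), hik⟩ ≤ ν i := by
  have hSg : Orthonormal ℂ (⇑S ∘ ⇑g) := g.orthonormal.comp_linearIsometry S
  have hmap : ∀ (s : Finset (Fin k)),
      Submodule.span ℂ ((⇑S ∘ ⇑g) '' ↑s) = Submodule.map S.toLinearMap
        (Submodule.span ℂ (⇑g '' ↑s)) := by
    intro s
    rw [Submodule.map_span, Set.image_comp, LinearIsometry.coe_toLinearMap]
  constructor
  · -- ν i ≤ μ i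
    set W1 := Submodule.span ℂ ((⇑S ∘ ⇑g) '' ↑(Finset.Iic i)) with hW1
    set W2 := Submodule.span ℂ (⇑f '' ↑(Finset.Ici (Fin.castLE hkn i))) with hW2
    have hd1 : Module.finrank ℂ W1 = (i : ℕ) + 1 := by
      rw [hW1, finrank_span_orthonormal hSg, Fin.card_Iic]
    have hd2 : Module.finrank ℂ W2 = n - (i : ℕ) := by
      rw [hW2, finrank_span_orthonormal f.orthonormal, Fin.card_Ici]
      simp
    obtain ⟨x, hx0, hx1, hx2⟩ := exists_ne_zero_mem_inf W1 W2 (by omega)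
    obtain ⟨y, hy, rfl⟩ := by rw [hW1, hmap] at hx1; exact hx1
    have hub : (⟪(S y : E), T (S y)⟫_ℂ).re ≤ μ (Fin.castLE hkn i) * ‖(S y : E)‖ ^ 2 :=
      rayleigh_le f μ T hT _ _ (fun j hj => hμ (Finset.mem_Ici.mp hj)) hx2
    have hlb : ν i * ‖y‖ ^ 2 ≤ (⟪y, U y⟫_ℂ).re :=
      rayleigh_ge g ν U hU _ _ (fun j hj => hν (Finset.mem_Iic.mp hj)) hy
    rw [← hSU y] at hlb
    rw [S.norm_map] at hub
    have hny : 0 < ‖y‖ ^ 2 :=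
      pow_pos (norm_pos_iff.mpr (fun h => hx0 (by simp [h]))) 2
    nlinarith [le_trans hlb hub]
  · -- μ (n-k+i) ≤ ν i
    set W1 := Submodule.span ℂ ((⇑S ∘ ⇑g) '' ↑(Finset.Ici i)) with hW1
    set W2 := Submodule.span ℂ (⇑f '' ↑(Finset.Iic (⟨n - k + (i : ℕ), hik⟩ : Fin n))) with hW2
    have hd1 : Module.finrank ℂ W1 = k - (i : ℕ) := by
      rw [hW1, finrank_span_orthonormal hSg, Fin.card_Ici]
    have hd2 : Module.finrank ℂ W2 = n - k + (i : ℕ) + 1 := by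
      rw [hW2, finrank_span_orthonormal f.orthonormal, Fin.card_Iic]
    have hik' : (i : ℕ) < k := i.isLt
    obtain ⟨x, hx0, hx1, hx2⟩ := exists_ne_zero_mem_inf W1 W2 (by omega)
    obtain ⟨y, hy, rfl⟩ := by rw [hW1, hmap] at hx1; exact hx1
    have hlb : μ ⟨n - k + (i : ℕ), hik⟩ * ‖(S y : E)‖ ^ 2 ≤ (⟪(S y : E), T (S y)⟫_ℂ).re :=
      rayleigh_ge f μ T hT _ _ (fun j hj => hμ (Finset.mem_Iic.mp hj)) hx2
    have hub : (⟪y, U y⟫_ℂ).re ≤ ν i * ‖y‖ ^ 2 :=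
      rayleigh_le g ν U hU _ _ (fun j hj => hν (Finset.mem_Ici.mp hj)) hy
    rw [← hSU y] at hub
    rw [S.norm_map] at hlb
    have hny : 0 < ‖y‖ ^ 2 :=
      pow_pos (norm_pos_iff.mpr (fun h => hx0 (by simp [h]))) 2
    nlinarith [le_trans hlb hub]

open Matrix in
noncomputable def charMat {n k : ℕ} (P : Fin n → Fin k) : Matrix (Fin n) (Fin k) ℂ :=
  fun i p => if P i = p then (((Real.sqrt ((partSet P p).card))⁻¹ : ℝ) : ℂ) else 0

lemma partSet_card_pos {n k : ℕ} {P : Fin n → Fin k} (hsurj : Function.Surjective P)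
    (p : Fin k) : 0 < (partSet P p).card := by
  obtain ⟨i, hi⟩ := hsurj p
  exact Finset.card_pos.mpr ⟨i, by simp [partSet, hi]⟩

open Matrix

lemma charMat_mul_self {n k : ℕ} {P : Fin n → Fin k} (hsurj : Function.Surjective P) :
    (charMat P)ᴴ * charMat P = 1 := by
  ext p q
  rw [Matrix.mul_apply]
  simp only [Matrix.conjTranspose_apply, charMat]
  by_cases hpq : p = q
  · subst hpq
    have hc : 0 < ((partSet P p).card : ℝ) := by exact_mod_cast partSet_card_pos hsurj p
    have : ∀ i : Fin n,
        star (if P i = p then (((Real.sqrt ((partSet P p).card))⁻¹ : ℝ) : ℂ) else 0) *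
          (if P i = p then (((Real.sqrt ((partSet P p).card))⁻¹ : ℝ) : ℂ) else 0)
        = if P i = p then ((((partSet P p).card : ℝ)⁻¹ : ℝ) : ℂ) else 0 := by
      intro i
      by_cases h : P i = p
      · simp only [h, if_true, Complex.star_def, Complex.conj_ofReal]
        rw [← Complex.ofReal_mul, ← mul_inv, Real.mul_self_sqrt hc.le]
      · simp [h]
    rw [Finset.sum_congr rfl (fun i _ => this i), ← Finset.sum_filter]
    rw [Finset.sum_const]
    show ((partSet P p).card : ℕ) • _ = (1 : Matrix (Fin k) (Fin k) ℂ) p p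
    rw [Matrix.one_apply_eq, nsmul_eq_mul, ← Complex.ofReal_natCast, ← Complex.ofReal_mul,
      mul_inv_cancel₀ hc.ne']
    norm_num
  · rw [Matrix.one_apply_ne hpq, Finset.sum_eq_zero]
    intro i _
    by_cases h : P i = p
    · have h2 : P i ≠ q := h ▸ hpq
      rw [if_neg h2, mul_zero]
    · simp [h]

lemma charMat_conj_mul {n k : ℕ} (A : Matrix (Fin n) (Fin n) ℂ) {P : Fin n → Fin k}
    (hsurj : Function.Surjective P) :
    (charMat P)ᴴ * A * charMat P = quotMatC A P P := by
  ext p q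
  rw [Matrix.mul_apply]
  simp only [Matrix.mul_apply, Matrix.conjTranspose_apply, charMat, quotMatC]
  have step : ∀ j : Fin n,
      (∑ i : Fin n, star (if P i = p then (((Real.sqrt ((partSet P p).card))⁻¹ : ℝ) : ℂ) else 0)
        * A i j) * (if P j = q then (((Real.sqrt ((partSet P q).card))⁻¹ : ℝ) : ℂ) else 0)
      = if P j = q then
          ∑ i : Fin n, (if P i = p then
            ((((Real.sqrt ((partSet P p).card))⁻¹ * (Real.sqrt ((partSet P q).card))⁻¹ : ℝ) : ℂ)
              * A i j) else 0) else 0 := by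
    intro j
    by_cases hj : P j = q
    · simp only [hj, if_true, Finset.sum_mul]
      refine Finset.sum_congr rfl fun i _ => ?_
      by_cases hi : P i = p
      · simp only [hi, if_true, Complex.star_def, Complex.conj_ofReal]
        push_cast
        ring
      · simp [hi]
    · simp [hj]
  rw [Finset.sum_congr rfl (fun j _ => step j), ← Finset.sum_filter]
  have inner_step : ∀ j : Fin n, (∑ i : Fin n, (if P i = p then
      ((((Real.sqrt ((partSet P p).card))⁻¹ * (Real.sqrt ((partSet P q).card))⁻¹ : ℝ) : ℂ)
        * A i j) else 0))
      = ∑ i ∈ partSet P p,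
        ((((Real.sqrt ((partSet P p).card))⁻¹ * (Real.sqrt ((partSet P q).card))⁻¹ : ℝ) : ℂ)
          * A i j) := by
    intro j
    rw [← Finset.sum_filter]
    rfl
  rw [Finset.sum_congr rfl (fun j _ => inner_step j)]
  show ∑ j ∈ partSet P q, ∑ i ∈ partSet P p, _ = _
  rw [Finset.sum_comm]
  simp_rw [← Finset.mul_sum]
  congr 1
  rw [one_div, Real.sqrt_mul (Nat.cast_nonneg _), mul_inv]

lemma toEuclideanLin_comp {a b c : ℕ}
    (M : Matrix (Fin a) (Fin b) ℂ) (N : Matrix (Fin b) (Fin c) ℂ) (v : EuclideanSpace ℂ (Fin c)) :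
    Matrix.toEuclideanLin M (Matrix.toEuclideanLin N v) = Matrix.toEuclideanLin (M * N) v := by
  exact congrArg (WithLp.toLp 2) (Matrix.mulVec_mulVec _ M N)

lemma toEuclideanLin_one {a : ℕ} (v : EuclideanSpace ℂ (Fin a)) :
    Matrix.toEuclideanLin (1 : Matrix (Fin a) (Fin a) ℂ) v = v := by
  exact congrArg (WithLp.toLp 2) (Matrix.one_mulVec _)

/-- Haemers: the eigenvalues of the quotient matrix `B = A|P×P`
interlace those of the Hermitian matrix `A`: for all `i ∈ [k]`,
`μ i (A) ≥ μ i (B) ≥ μ (n-k+i) (A)` (0-based indexing). -/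
theorem stmt9 {n k : ℕ} (hk : 1 < k) (hkn : k < n)
    (A : Matrix (Fin n) (Fin n) ℂ) (hA : A.IsHermitian)
    (P : Fin n → Fin k) (hsurj : Function.Surjective P)
    (hB : (quotMatC A P P).IsHermitian)
    (μ : Fin n → ℝ) (hμmono : Antitone μ)
    (hμperm : ∃ σ : Equiv.Perm (Fin n), μ = hA.eigenvalues ∘ σ)
    (ν : Fin k → ℝ) (hνmono : Antitone ν)
    (hνperm : ∃ τ : Equiv.Perm (Fin k), ν = hB.eigenvalues ∘ τ) :
    ∀ i : Fin k, ν i ≤ μ (Fin.castLE hkn.le i) ∧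
      μ ⟨n - k + (i : ℕ), by omega⟩ ≤ ν i := by
  intro i
  obtain ⟨σ, hσ⟩ := hμperm
  obtain ⟨τ, hτ⟩ := hνperm
  set f : OrthonormalBasis (Fin n) ℂ (EuclideanSpace ℂ (Fin n)) :=
    hA.eigenvectorBasis.reindex σ.symm with hf
  set g : OrthonormalBasis (Fin k) ℂ (EuclideanSpace ℂ (Fin k)) :=
    hB.eigenvectorBasis.reindex τ.symm with hg
  have hsmul : ∀ {m : ℕ} (r : ℝ) (x : EuclideanSpace ℂ (Fin m)), (r : ℂ) • x = r • x := by
    intro m r x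
    rw [show ((r : ℝ) : ℂ) = algebraMap ℝ ℂ r from rfl, algebraMap_smul]
  have hT : ∀ j, Matrix.toEuclideanLin A (f j) = ((μ j : ℝ) : ℂ) • f j := by
    intro j
    have h2 : f j = hA.eigenvectorBasis (σ j) := by
      rw [hf, OrthonormalBasis.reindex_apply, Equiv.symm_symm]
    rw [h2, hσ, Function.comp_apply, hsmul]
    exact congrArg (WithLp.toLp 2) (hA.mulVec_eigenvectorBasis (σ j))
  have hU : ∀ j, Matrix.toEuclideanLin (quotMatC A P P) (g j) = ((ν j : ℝ) : ℂ) • g j := by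
    intro j
    have h2 : g j = hB.eigenvectorBasis (τ j) := by
      rw [hg, OrthonormalBasis.reindex_apply, Equiv.symm_symm]
    rw [h2, hτ, Function.comp_apply, hsmul]
    exact congrArg (WithLp.toLp 2) (hB.mulVec_eigenvectorBasis (τ j))
  set L := Matrix.toEuclideanLin (charMat P) with hL
  have hinner : ∀ x y : EuclideanSpace ℂ (Fin k), ⟪L x, L y⟫_ℂ = ⟪x, y⟫_ℂ := by
    intro x y
    have h1 : ⟪x, (LinearMap.adjoint L) (L y)⟫_ℂ = ⟪L x, L y⟫_ℂ :=
      LinearMap.adjoint_inner_right L _ _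
    rw [← h1, hL, ← Matrix.toEuclideanLin_conjTranspose_eq_adjoint, toEuclideanLin_comp,
      charMat_mul_self hsurj, toEuclideanLin_one]
  have hnorm : ∀ y, ‖L y‖ = ‖y‖ := by
    intro y
    have h2 : ‖L y‖^2 = ‖y‖^2 := by
      rw [← @inner_self_eq_norm_sq ℂ, ← @inner_self_eq_norm_sq ℂ, hinner]
    have h3 := congrArg Real.sqrt h2
    rwa [Real.sqrt_sq (norm_nonneg _), Real.sqrt_sq (norm_nonneg _)] at h3
  let S' : EuclideanSpace ℂ (Fin k) →ₗᵢ[ℂ] EuclideanSpace ℂ (Fin n) := ⟨L, hnorm⟩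
  have hSU : ∀ y, ⟪(S' y : EuclideanSpace ℂ (Fin n)), Matrix.toEuclideanLin A (S' y)⟫_ℂ
      = ⟪y, Matrix.toEuclideanLin (quotMatC A P P) y⟫_ℂ := by
    intro y
    have h1 : ⟪y, (LinearMap.adjoint L) (Matrix.toEuclideanLin A (L y))⟫_ℂ
        = ⟪L y, Matrix.toEuclideanLin A (L y)⟫_ℂ := LinearMap.adjoint_inner_right L _ _
    rw [show (S' y : EuclideanSpace ℂ (Fin n)) = L y from rfl, ← h1, hL,
      ← Matrix.toEuclideanLin_conjTranspose_eq_adjoint, toEuclideanLin_comp, toEuclideanLin_comp,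
      charMat_conj_mul A hsurj]
  have hik : n - k + (i : ℕ) < n := by have := i.isLt; omega
  exact interlace_abstract hkn.le (by simp) f μ hμmono
    (Matrix.toEuclideanLin A) hT g ν hνmono (Matrix.toEuclideanLin (quotMatC A P P)) hU S' hSU i hik
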